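/- Let X_1,…,X_N be Banach spaces of scalar sequences containing the canonical unit vectors e_n, and let Y be a strictly convex Banach space. If a continuous N-linear map Φ : X_1 × ⋯ × X_N → Y attains its norm at (a_1,…,a_N) ∈ B_{X_1} × ⋯ × B_{X_N}, where each a_j has the property that there exist n_j ∈ ℕ and δ_j > 0 with ‖a_j + λ e_n‖ ≤ 1 for all |λ| ≤ δ_j and n ≥ n_j, then there exists n_0 ∈ ℕ such that Φ(e_{n_1},…,e_{n_N}) = 0 for all n_1,…,n_N ≥ n_0. -/

import Mathlib

noncomputable section

open NormedSpace Filter Topology Metric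

/-- The topological dual of a normed space, `E →L[𝕜] 𝕜` (the older Mathlib's `NormedSpace.Dual`,
restored here with its old signature). -/
abbrev NormedSpace.Dual (𝕜 : Type*) [NontriviallyNormedField 𝕜] (E : Type*)
    [SeminormedAddCommGroup E] [NormedSpace 𝕜 E] : Type _ :=
  E →L[𝕜] 𝕜

/-- The dual (transpose) of a continuous linear operator between normed spaces. -/
def dualOp (𝕜 : Type*) [RCLike 𝕜] {E F : Type*} [NormedAddCommGroup E] [NormedSpace 𝕜 E]
    [NormedAddCommGroup F] [NormedSpace 𝕜 F] (T : E →L[𝕜] F) :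
    NormedSpace.Dual 𝕜 F →L[𝕜] NormedSpace.Dual 𝕜 E :=
  (ContinuousLinearMap.compL 𝕜 E F 𝕜).flip T

/-- The canonical (Arens) extension of a continuous multilinear map `Φ : X × ⋯ × X → W`
to the bidual, evaluated at a point `xs` of the `N`-fold product of the bidual of `X`,
with values in the bidual of `W`.  It is obtained by extending one variable at a time,
the first variable being extended last (which corresponds to the iterated weak-star
limit `lim_{α₁} … lim_{α_N}`).  It is bundled as a continuous linear map in `Φ`. -/
def arens (𝕜 : Type*) [RCLike 𝕜] (X W : Type*) [NormedAddCommGroup X] [NormedSpace 𝕜 X]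
    [NormedAddCommGroup W] [NormedSpace 𝕜 W] :
    ∀ {N : ℕ}, (Fin N → NormedSpace.Dual 𝕜 (NormedSpace.Dual 𝕜 X)) →
      (ContinuousMultilinearMap 𝕜 (fun _ : Fin N => X) W →L[𝕜]
        NormedSpace.Dual 𝕜 (NormedSpace.Dual 𝕜 W))
  | 0, _ =>
      (NormedSpace.inclusionInDoubleDual 𝕜 W).comp
        ((continuousMultilinearCurryFin0 𝕜 X W).toContinuousLinearEquiv :
          ContinuousMultilinearMap 𝕜 (fun _ : Fin 0 => X) W ≃L[𝕜] W).toContinuousLinearMap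
  | (N + 1), xs =>
      ((ContinuousLinearMap.compL 𝕜 (NormedSpace.Dual 𝕜 W) (NormedSpace.Dual 𝕜 X) 𝕜 (xs 0)).comp
        (((ContinuousLinearMap.flipₗᵢ 𝕜 X (NormedSpace.Dual 𝕜 W) 𝕜).toContinuousLinearEquiv :
            (X →L[𝕜] NormedSpace.Dual 𝕜 (NormedSpace.Dual 𝕜 W)) ≃L[𝕜]
              (NormedSpace.Dual 𝕜 W →L[𝕜] NormedSpace.Dual 𝕜 X)).toContinuousLinearMap.comp
          ((ContinuousLinearMap.compL 𝕜 X
              (ContinuousMultilinearMap 𝕜 (fun _ : Fin N => X) W)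
              (NormedSpace.Dual 𝕜 (NormedSpace.Dual 𝕜 W)) (arens 𝕜 X W (Fin.tail xs))).comp
            ((continuousMultilinearCurryLeftEquiv 𝕜 (fun _ : Fin (N + 1) => X)
                W).toContinuousLinearEquiv :
              ContinuousMultilinearMap 𝕜 (fun _ : Fin (N + 1) => X) W ≃L[𝕜]
                (X →L[𝕜] ContinuousMultilinearMap 𝕜 (fun _ : Fin N => X) W)).toContinuousLinearMap)))

end

section Core2

open NormedSpace Filter Topology Metric

variable (𝕜 : Type*) [RCLike 𝕜] {X W : Type*} [NormedAddCommGroup X] [NormedSpace 𝕜 X]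
  [NormedAddCommGroup W] [NormedSpace 𝕜 W] {N : ℕ}

/-- The norm of the `N`-homogeneous polynomial associated to a continuous multilinear map,
i.e. the supremum of `‖Φ (x, …, x)‖` over the closed unit ball. -/
noncomputable def polyNorm (Φ : ContinuousMultilinearMap 𝕜 (fun _ : Fin N => X) W) : ℝ :=
  ⨆ x : Metric.closedBall (0 : X) 1, ‖Φ (fun _ => (x : X))‖

/-- A multilinear map is symmetric if it is invariant under permutation of its arguments. -/
def IsSymmetricMap (Φ : ContinuousMultilinearMap 𝕜 (fun _ : Fin N => X) W) : Prop :=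
  ∀ (σ : Equiv.Perm (Fin N)) (m : Fin N → X), Φ (fun i => m (σ i)) = Φ m

/-- The polynomial associated to `Φ` attains its norm on the closed unit ball. -/
def PolyNormAttaining (Φ : ContinuousMultilinearMap 𝕜 (fun _ : Fin N => X) W) : Prop :=
  ∃ a : X, ‖a‖ ≤ 1 ∧ ‖Φ (fun _ => a)‖ = polyNorm 𝕜 Φ

/-- The Aron–Berner extension of the polynomial associated to `Φ` attains its norm on the
closed unit ball of the bidual.  (Recall that the Aron–Berner extension has the same norm
as the polynomial itself.) -/
def ABNormAttaining (Φ : ContinuousMultilinearMap 𝕜 (fun _ : Fin N => X) W) : Prop :=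
  ∃ a'' : NormedSpace.Dual 𝕜 (NormedSpace.Dual 𝕜 X), ‖a''‖ ≤ 1 ∧
    ‖arens 𝕜 X W (fun _ => a'') Φ‖ = polyNorm 𝕜 Φ

/-- A normed space `E` has the approximation property if the identity map can be approximated,
uniformly on compact sets, by continuous finite-rank operators. -/
def HasApproximationProperty (E : Type*) [NormedAddCommGroup E] [NormedSpace 𝕜 E] : Prop :=
  ∀ K : Set E, IsCompact K → ∀ ε : ℝ, 0 < ε →
    ∃ T : E →L[𝕜] E, FiniteDimensional 𝕜 (LinearMap.range (T : E →ₗ[𝕜] E)) ∧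
      ∀ x ∈ K, ‖T x - x‖ ≤ ε

end Core2

/-- Lemma 4.3: let `X₁, …, X_N` be Banach sequence spaces and `Y` strictly convex.  If a
continuous `N`-linear map `Φ : X₁ × ⋯ × X_N → Y` attains its norm at `(a₁, …, a_N)`, where
each `a_j` satisfies the extremal condition (3.1), then there is `n₀` such that
`Φ(e_{n₁}, …, e_{n_N}) = 0` whenever `n₁, …, n_N ≥ n₀`. -/
theorem multilinear_vanishes_on_unit_vectors
    {𝕜 : Type*} [RCLike 𝕜] (N : ℕ) (hN : 0 < N)
    (X : Fin N → Type*) [∀ j, NormedAddCommGroup (X j)] [∀ j, NormedSpace 𝕜 (X j)]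
    [∀ j, CompleteSpace (X j)]
    (toSeq : ∀ j, X j →ₗ[𝕜] (ℕ → 𝕜)) (htoSeq : ∀ j, Function.Injective (toSeq j))
    (en : ∀ j, ℕ → X j) (hen : ∀ j n, toSeq j (en j n) = Pi.single n (1 : 𝕜))
    (Y : Type*) [NormedAddCommGroup Y] [NormedSpace 𝕜 Y] [CompleteSpace Y]
    [NormedSpace ℝ Y] [IsScalarTower ℝ 𝕜 Y] [StrictConvexSpace ℝ Y]
    (Φ : ContinuousMultilinearMap 𝕜 X Y)
    (a : ∀ j, X j) (ha : ∀ j, ‖a j‖ ≤ 1) (hattain : ‖Φ a‖ = ‖Φ‖)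
    (hext : ∀ j, ∃ (n₀ : ℕ) (δ : ℝ), 0 < δ ∧
      ∀ lam : 𝕜, ‖lam‖ ≤ δ → ∀ n, n₀ ≤ n → ‖a j + lam • en j n‖ ≤ 1) :
    ∃ n₀ : ℕ, ∀ n : Fin N → ℕ, (∀ j, n₀ ≤ n j) → Φ (fun j => en j (n j)) = 0 := by
  classical
  choose mm δ hδ hb using hext
  by_cases hR : Φ = 0
  · exact ⟨0, fun n _ => by simp [hR]⟩
  have hRpos : 0 < ‖Φ‖ := norm_pos_iff.mpr hR
  refine ⟨Finset.univ.sup mm, fun n hn => ?_⟩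
  have hnj : ∀ j, mm j ≤ n j := fun j =>
    le_trans (Finset.le_sup (Finset.mem_univ j)) (hn j)
  set e : ∀ j, X j := fun j => en j (n j) with he
  have key : ∀ S : Finset (Fin N), S.Nonempty → Φ (S.piecewise e a) = 0 := by
    intro S
    induction S using Finset.strongInduction with
    | _ S IH =>
      intro hS
      obtain ⟨j₀, hj₀⟩ := hS
      set r : ℝ := ∏ j ∈ S, δ j with hr
      have hrpos : 0 < r := Finset.prod_pos fun j _ => hδ j
      have main : ∀ ε : ℝ, |ε| = 1 →
          ‖Φ a + ((ε * r : ℝ) : 𝕜) • Φ (S.piecewise e a)‖ ≤ ‖Φ‖ := by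
        intro ε hε
        set lam : Fin N → 𝕜 := fun j => (((if j = j₀ then ε else 1) * δ j : ℝ) : 𝕜) with hlam
        have hlamnorm : ∀ j, ‖lam j‖ = δ j := by
          intro j
          have h1 : |(if j = j₀ then ε else 1 : ℝ)| = 1 := by
            by_cases hj : j = j₀ <;> simp [hj, hε]
          show ‖(((if j = j₀ then ε else 1) * δ j : ℝ) : 𝕜)‖ = δ j
          rw [RCLike.norm_ofReal, abs_mul, h1, one_mul, abs_of_pos (hδ j)]
        set p : ∀ j, X j := fun j => if j ∈ S then lam j • e j else 0 with hp
        have hnorm : ∀ j, ‖a j + p j‖ ≤ 1 := by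
          intro j
          by_cases hj : j ∈ S
          · simp only [hp, if_pos hj]
            exact hb j (lam j) (le_of_eq (hlamnorm j)) (n j) (hnj j)
          · simp only [hp, if_neg hj, add_zero]
            exact ha j
        have hterm : ∀ T : Finset (Fin N), T ∉ ({∅, S} : Finset (Finset (Fin N))) →
            Φ (T.piecewise p a) = 0 := by
          intro T hT
          simp only [Finset.mem_insert, Finset.mem_singleton] at hT
          push_neg at hT
          by_cases hTS : T ⊆ S
          · have hpe : T.piecewise p a =
                T.piecewise (fun j => lam j • (T.piecewise e a) j) (T.piecewise e a) := by
              funext j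
              by_cases hj : j ∈ T
              · simp [Finset.piecewise_eq_of_mem _ _ _ hj, hp, if_pos (hTS hj)]
              · simp [Finset.piecewise_eq_of_notMem _ _ _ hj]
            rw [hpe, Φ.map_piecewise_smul]
            have hT0 : Φ (T.piecewise e a) = 0 := by
              rcases Finset.eq_empty_or_nonempty T with h | h
              · exact absurd h hT.1.ne_empty
              · exact IH T (lt_of_le_of_ne hTS hT.2) h
            rw [hT0, smul_zero]
          · obtain ⟨j, hjT, hjS⟩ := Finset.not_subset.mp hTS
            refine Φ.map_coord_zero j ?_
            rw [Finset.piecewise_eq_of_mem _ _ _ hjT]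
            simp [hp, hjS]
        have hexp : Φ (p + a) = Φ a + ((ε * r : ℝ) : 𝕜) • Φ (S.piecewise e a) := by
          rw [Φ.map_add_univ]
          rw [← Finset.sum_subset (Finset.subset_univ ({∅, S} : Finset (Finset (Fin N))))
            (fun T _ hT => hterm T hT)]
          rw [Finset.sum_pair (by rintro rfl; exact absurd hj₀ (Finset.notMem_empty j₀))]
          have h0 : Φ ((∅ : Finset (Fin N)).piecewise p a) = Φ a := by simp
          have hpe : S.piecewise p a =
              S.piecewise (fun j => lam j • (S.piecewise e a) j) (S.piecewise e a) := by
            funext j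
            by_cases hj : j ∈ S
            · simp [Finset.piecewise_eq_of_mem _ _ _ hj, hp, if_pos hj]
            · simp [Finset.piecewise_eq_of_notMem _ _ _ hj]
          have hSterm : Φ (S.piecewise p a) = ((ε * r : ℝ) : 𝕜) • Φ (S.piecewise e a) := by
            rw [hpe, Φ.map_piecewise_smul]
            congr 1
            calc ∏ j ∈ S, lam j
                = (algebraMap ℝ 𝕜) (∏ j ∈ S, (if j = j₀ then ε else 1) * δ j) :=
                  (map_prod (algebraMap ℝ 𝕜) _ S).symm
              _ = ((ε * r : ℝ) : 𝕜) := by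
                  congr 1
                  rw [Finset.prod_mul_distrib, Finset.prod_ite_eq' S j₀ (fun _ => ε),
                    if_pos hj₀]
          rw [h0, hSterm]
        have hle : ‖Φ (p + a)‖ ≤ ‖Φ‖ := by
          calc ‖Φ (p + a)‖ ≤ ‖Φ‖ * ∏ j, ‖(p + a) j‖ := Φ.le_opNorm _
            _ ≤ ‖Φ‖ * 1 := by
                refine mul_le_mul_of_nonneg_left ?_ (norm_nonneg Φ)
                refine Finset.prod_le_one (fun j _ => norm_nonneg _) (fun j _ => ?_)
                simpa [add_comm] using hnorm j
            _ = ‖Φ‖ := mul_one _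
        rw [hexp] at hle
        exact hle
      have hcast : ∀ ε : ℝ, ((ε * r : ℝ) : 𝕜) • Φ (S.piecewise e a) =
          (ε * r) • Φ (S.piecewise e a) := fun ε =>
        (RCLike.real_smul_eq_coe_smul (K := 𝕜) _ _).symm
      have h1 := main 1 (by norm_num)
      have h2 := main (-1) (by norm_num)
      rw [hcast] at h1 h2
      set z := Φ (S.piecewise e a) with hz
      set u := Φ a + (1 * r) • z with hu
      set v := Φ a + (-1 * r) • z with hv
      have huv : u + v = (2 : ℝ) • Φ a := by
        rw [hu, hv]
        module
      have hsum : ‖u + v‖ = 2 * ‖Φ‖ := by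
        rw [huv, norm_smul, ← hattain]
        norm_num
      have hun : ‖u‖ = ‖Φ‖ := by
        have : 2 * ‖Φ‖ ≤ ‖u‖ + ‖v‖ := hsum ▸ norm_add_le u v
        linarith
      have hvn : ‖v‖ = ‖Φ‖ := by
        have : 2 * ‖Φ‖ ≤ ‖u‖ + ‖v‖ := hsum ▸ norm_add_le u v
        linarith
      have huveq : u = v := by
        refine eq_of_norm_eq_of_norm_add_eq (hun.trans hvn.symm) ?_
        rw [hsum, hun, hvn]; ring
      have hz0 : (2 * r) • z = 0 := by
        have := sub_eq_zero.mpr huveq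
        rw [hu, hv] at this
        rw [show (2 * r) • z = (Φ a + (1 * r) • z) - (Φ a + (-1 * r) • z) by module]
        exact this
      have : z = 0 := by
        rcases smul_eq_zero.mp hz0 with h | h
        · exact absurd h (by positivity)
        · exact h
      exact this
  haveI : Nonempty (Fin N) := ⟨⟨0, hN⟩⟩
  have := key Finset.univ (Finset.univ_nonempty (α := Fin N))
  rwa [Finset.piecewise_univ] at this
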